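/- Let Ψ, Φ and h be as in the canonical construction. For any tight total-cover f of the refined Label Cover instance L, the refined canonical formula Φ_f, obtained as the conjunction of Ψ with the clauses (e′) v(j) → u(ℓ) for all j ∈ [t] and all labels ℓ ∈ f(x) ∪ f(y) over all x ∈ X and y ∈ Y, represents the pure Horn function h. -/
import Mathlib


open Finset

/-- A clause, given by its (fin)sets of positive and negative variables. -/
structure Clause (V : Type*) where
  pos : Finset V
  neg : Finset V
deriving DecidableEq

namespace Clause

variable {V : Type*}

/-- A genuine clause: no variable occurs both positively and negatively. -/
def IsClause (C : Clause V) : Prop := Disjoint C.pos C.neg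

/-- Evaluation of a clause (as a disjunction of literals) under an assignment. -/
def eval (C : Clause V) (a : V → Bool) : Prop :=
  (∃ v ∈ C.pos, a v = true) ∨ (∃ v ∈ C.neg, a v = false)

/-- A pure (definite) Horn clause: exactly one positive literal, its head. -/
def IsPureHorn (C : Clause V) : Prop := ∃ v, C.pos = {v}

end Clause

variable {V : Type*}

/-- Conjunction (as a predicate on assignments) of a set of clauses. -/
def evalSet (S : Set (Clause V)) (a : V → Bool) : Prop := ∀ C ∈ S, C.eval a

/-- Conjunction of the clauses of a CNF, i.e. of a finite set of clauses. -/
def evalCNF (Φ : Finset (Clause V)) (a : V → Bool) : Prop := ∀ C ∈ Φ, C.eval a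

/-- A CNF represents a Boolean function `h`. -/
def Represents (Φ : Finset (Clause V)) (h : (V → Bool) → Prop) : Prop :=
  ∀ a, evalCNF Φ a ↔ h a

/-- A pure Horn CNF: all clauses are pure Horn. -/
def IsPureHornCNF (Φ : Finset (Clause V)) : Prop :=
  ∀ C ∈ Φ, C.IsClause ∧ C.IsPureHorn

/-- The forward chaining closure of a set `Q` of variables with respect to the
pure Horn CNF `Φ`: the smallest set containing `Q` such that whenever `Φ` contains
a clause `S → v` with `S` inside the set, also `v` belongs to it. -/
def fcClosure (Φ : Finset (Clause V)) (Q : Set V) : Set V :=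
  ⋂₀ {T : Set V | Q ⊆ T ∧ ∀ C ∈ Φ, ∀ v : V, C.pos = {v} → ↑C.neg ⊆ T → v ∈ T}

/-- `C` is an implicate of `h`: every assignment falsifying `C` falsifies `h`. -/
def Implicate (h : (V → Bool) → Prop) (C : Clause V) : Prop :=
  ∀ a, ¬ C.eval a → ¬ h a

/-- `C` is a prime implicate of `h`: an implicate from which no literal can be
deleted while remaining an implicate. -/
def PrimeImplicate [DecidableEq V] (h : (V → Bool) → Prop) (C : Clause V) : Prop :=
  C.IsClause ∧ Implicate h C ∧
  (∀ v ∈ C.pos, ¬ Implicate h ⟨C.pos.erase v, C.neg⟩) ∧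
  (∀ v ∈ C.neg, ¬ Implicate h ⟨C.pos, C.neg.erase v⟩)

/-- `C₁` and `C₂` are resolvable on `v`: `v` occurs positively in `C₁`, negatively in
`C₂`, and no other variable occurs with opposite signs in them. -/
def Resolvable (C₁ C₂ : Clause V) (v : V) : Prop :=
  v ∈ C₁.pos ∧ v ∈ C₂.neg ∧
  ∀ w, w ≠ v → ¬(w ∈ C₁.pos ∧ w ∈ C₂.neg) ∧ ¬(w ∈ C₁.neg ∧ w ∈ C₂.pos)

/-- The resolvent `R(C₁,C₂) = (C₁ \ {v}) ∪ (C₂ \ {v̄})`. -/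
def resolventOf [DecidableEq V] (C₁ C₂ : Clause V) (v : V) : Clause V :=
  ⟨C₁.pos.erase v ∪ C₂.pos, C₁.neg ∪ C₂.neg.erase v⟩

/-- A set of clauses closed under resolution. -/
def ResClosed [DecidableEq V] (S : Set (Clause V)) : Prop :=
  ∀ C₁ ∈ S, ∀ C₂ ∈ S, ∀ v, Resolvable C₁ C₂ v → resolventOf C₁ C₂ v ∈ S

/-- The resolution closure of a set of clauses. -/
def resClosure [DecidableEq V] (S : Set (Clause V)) : Set (Clause V) :=
  ⋂₀ {T : Set (Clause V) | S ⊆ T ∧ ResClosed T}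

/-- `I(h)`: the resolution closure of the set of prime implicates of `h`. -/
def implSet [DecidableEq V] (h : (V → Bool) → Prop) : Set (Clause V) :=
  resClosure {C | PrimeImplicate h C}

/-- An exclusive set of clauses of `h`. -/
def ExclusiveSet [DecidableEq V] (h : (V → Bool) → Prop) (Xs : Set (Clause V)) : Prop :=
  Xs ⊆ implSet h ∧
  ∀ C₁ ∈ implSet h, ∀ C₂ ∈ implSet h, ∀ v, Resolvable C₁ C₂ v →
    resolventOf C₁ C₂ v ∈ Xs → C₁ ∈ Xs ∧ C₂ ∈ Xs

/-- The set of variables occurring in a CNF. -/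
def varsOf [DecidableEq V] (Φ : Finset (Clause V)) : Finset V :=
  Φ.biUnion fun C => C.pos ∪ C.neg


/-- A Label Cover instance: a bipartite graph with parts `X` and `Y` and edge set `E`,
label sets `A` (for `X`-vertices) and `B` (for `Y`-vertices), and a nonempty
constraint relation `cst e ⊆ A × B` for every edge `e ∈ E`. -/
structure LabelCover (X Y A B : Type*) where
  E : Finset (X × Y)
  cst : X × Y → Finset (A × B)
  cst_nonempty : ∀ e ∈ E, (cst e).Nonempty

namespace LabelCover

variable {X Y A B : Type*}

/-- A labeling `(f, g)` covers an edge `(x,y)` if for every label `b ∈ g y` there is a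
label `a ∈ f x` with `(a, b)` admissible for the edge. -/
def Covers (I : LabelCover X Y A B) (f : X → Finset A) (g : Y → Finset B)
    (e : X × Y) : Prop :=
  ∀ b ∈ g e.2, ∃ a ∈ f e.1, (a, b) ∈ I.cst e

/-- A total-cover: a labeling (assigning a nonempty label set to every `Y`-vertex)
covering every edge. -/
def IsTotalCover (I : LabelCover X Y A B) (f : X → Finset A) (g : Y → Finset B) : Prop :=
  (∀ y, (g y).Nonempty) ∧ ∀ e ∈ I.E, I.Covers f g e

/-- A total-cover is tight if every `Y`-vertex receives exactly one label. -/
def Tight (g : Y → Finset B) : Prop := ∀ y, (g y).card = 1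

end LabelCover

/-- The cost of a labeling: the average number of labels assigned to `X`-vertices. -/
def lcCost {X A : Type*} [Fintype X] (f : X → Finset A) : ℚ :=
  (∑ x, ((f x).card : ℚ)) / (Fintype.card X : ℚ)


/-- The labels of the refined Label Cover instance: `L ∪ L′`, where `L = ⋃_x L_x`
with `L_x = {x} × A` and `L′ = ⋃_y L′_y` with `L′_y = {y} × B`. -/
abbrev Lab (X Y A B : Type*) := (X × A) ⊕ (Y × B)

/-- The propositional variables of the canonical pure Horn CNF construction:
`u ℓ` for labels `ℓ ∈ L ∪ L′`, `e x y i` and `el x y ℓ′ i` for edges `(x,y)`,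
labels `ℓ′ ∈ L′_y` and indices `i ∈ [d]`, and `v j` for `j ∈ [t]`. -/
inductive PV (X Y A B : Type*) where
  | u : Lab X Y A B → PV X Y A B
  | e : X → Y → ℕ → PV X Y A B
  | el : X → Y → B → ℕ → PV X Y A B
  | v : ℕ → PV X Y A B
deriving DecidableEq

section Canonical

variable {X Y A B : Type*} [Fintype X] [Fintype Y] [Fintype A] [Fintype B]
  [DecidableEq X] [DecidableEq Y] [DecidableEq A] [DecidableEq B]

/-- The (open) neighborhood `N(y) = {z ∈ X : (z,y) ∈ E}`. -/
def Nbr (I : LabelCover X Y A B) (y : Y) : Finset X :=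
  Finset.univ.filter fun z => (z, y) ∈ I.E

/-- Clauses (a): `u(ℓ) ∧ u(ℓ′) → e(x,y,ℓ′,i)` for `(x,y) ∈ E`, `(ℓ,ℓ′) ∈ Π_{(x,y)}`,
`i ∈ [d]`. -/
def clA (I : LabelCover X Y A B) (d : ℕ) : Finset (Clause (PV X Y A B)) :=
  (I.E ×ˢ Finset.Icc 1 d).biUnion fun p =>
    (I.cst p.1).image fun ab =>
      ⟨{PV.el p.1.1 p.1.2 ab.2 p.2},
       {PV.u (Sum.inl (p.1.1, ab.1)), PV.u (Sum.inr (p.1.2, ab.2))}⟩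

/-- Clauses (b): `⋀_{z ∈ N(y)} e(z,y,ℓ′,i) → e(x,y,i)` for `(x,y) ∈ E`, `ℓ′ ∈ L′_y`,
`i ∈ [d]`. -/
def clB (I : LabelCover X Y A B) (d : ℕ) : Finset (Clause (PV X Y A B)) :=
  ((I.E ×ˢ (Finset.univ : Finset B)) ×ˢ Finset.Icc 1 d).image fun p =>
    ⟨{PV.e p.1.1.1 p.1.1.2 p.2},
     (Nbr I p.1.1.2).image fun z => PV.el z p.1.1.2 p.1.2 p.2⟩

/-- Clauses (c): `e(x,y,i) → e(x,y,ℓ′,i)` for `(x,y) ∈ E`, `ℓ′ ∈ L′_y`, `i ∈ [d]`. -/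
def clC (I : LabelCover X Y A B) (d : ℕ) : Finset (Clause (PV X Y A B)) :=
  ((I.E ×ˢ (Finset.univ : Finset B)) ×ˢ Finset.Icc 1 d).image fun p =>
    ⟨{PV.el p.1.1.1 p.1.1.2 p.1.2 p.2}, {PV.e p.1.1.1 p.1.1.2 p.2}⟩

/-- The common body of the clauses (d): all variables `e(x,y,i)`, `(x,y) ∈ E`, `i ∈ [d]`. -/
def bigBody (I : LabelCover X Y A B) (d : ℕ) : Finset (PV X Y A B) :=
  (I.E ×ˢ Finset.Icc 1 d).image fun p => PV.e p.1.1 p.1.2 p.2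

/-- Clauses (d): `⋀_{i ∈ [d]} ⋀_{(x,y) ∈ E} e(x,y,i) → u(ℓ)` for `ℓ ∈ L ∪ L′`. -/
def clD (I : LabelCover X Y A B) (d : ℕ) : Finset (Clause (PV X Y A B)) :=
  (Finset.univ : Finset (Lab X Y A B)).image fun ℓ => ⟨{PV.u ℓ}, bigBody I d⟩

/-- Clauses (e): `v(j) → u(ℓ)` for `j ∈ [t]`, `ℓ ∈ L ∪ L′`. -/
def clE (X Y A B : Type*) [Fintype X] [Fintype Y] [Fintype A] [Fintype B]
    [DecidableEq X] [DecidableEq Y] [DecidableEq A] [DecidableEq B]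
    (t : ℕ) : Finset (Clause (PV X Y A B)) :=
  (Finset.Icc 1 t ×ˢ (Finset.univ : Finset (Lab X Y A B))).image fun p =>
    ⟨{PV.u p.2}, {PV.v p.1}⟩

/-- The canonical formula `Ψ`: clauses of types (a)–(d). -/
def PsiCNF (I : LabelCover X Y A B) (d : ℕ) : Finset (Clause (PV X Y A B)) :=
  clA I d ∪ clB I d ∪ clC I d ∪ clD I d

/-- The canonical formula `Φ`: clauses of types (a)–(e). -/
def PhiCNF (I : LabelCover X Y A B) (d t : ℕ) : Finset (Clause (PV X Y A B)) :=
  PsiCNF I d ∪ clE X Y A B t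

/-- The pure Horn function `h` represented by the canonical formula `Φ`. -/
def hFun (I : LabelCover X Y A B) (d t : ℕ) : (PV X Y A B → Bool) → Prop :=
  fun a => evalCNF (PhiCNF I d t) a

/-- The pure Horn function `g` represented by the canonical formula `Ψ`. -/
def gFun (I : LabelCover X Y A B) (d : ℕ) : (PV X Y A B → Bool) → Prop :=
  fun a => evalCNF (PsiCNF I d) a

end Canonical


/-- The clauses (e′): `v(j) → u(ℓ)` for all `j ∈ [t]` and all labels
`ℓ ∈ f(x) ∪ f(y)`, over all `x ∈ X` and `y ∈ Y`, for a labeling `(f, g)`. -/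
def clE' {X Y A B : Type*} [Fintype X] [Fintype Y] [Fintype A] [Fintype B]
    [DecidableEq X] [DecidableEq Y] [DecidableEq A] [DecidableEq B]
    (f : X → Finset A) (g : Y → Finset B) (t : ℕ) : Finset (Clause (PV X Y A B)) :=
  (Finset.Icc 1 t ×ˢ
    (((Finset.univ : Finset X).biUnion fun x =>
        (f x).image fun a => (Sum.inl (x, a) : Lab X Y A B)) ∪
     ((Finset.univ : Finset Y).biUnion fun y =>
        (g y).image fun b => (Sum.inr (y, b) : Lab X Y A B)))).image fun p =>
    ⟨{PV.u p.2}, {PV.v p.1}⟩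

/-- For any tight total-cover `(f, g)` of the (refined) Label Cover
instance, the refined canonical formula `Φ_f = Ψ ∧ (e′)` represents the canonical
pure Horn function `h`. -/
theorem refined_canonical_represents
    {X Y A B : Type*} [Fintype X] [Fintype Y] [Fintype A] [Fintype B]
    [DecidableEq X] [DecidableEq Y] [DecidableEq A] [DecidableEq B]
    [Nonempty X] [Nonempty Y]
    (I : LabelCover X Y A B) (d t : ℕ) (hd : 1 ≤ d) (ht : 1 ≤ t)
    (hnoIsoX : ∀ x : X, ∃ y, (x, y) ∈ I.E)
    (hnoIsoY : ∀ y : Y, ∃ x, (x, y) ∈ I.E)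
    (f : X → Finset A) (g : Y → Finset B)
    (hcov : I.IsTotalCover f g) (htight : LabelCover.Tight g) :
    Represents (PsiCNF I d ∪ clE' f g t) (hFun I d t) := by
  intro a
  unfold hFun PhiCNF
  constructor
  · intro h1 C hC
    have hΨ : ∀ C ∈ PsiCNF I d, C.eval a := fun C hC =>
      h1 C (Finset.mem_union_left _ hC)
    rw [Finset.mem_union] at hC
    rcases hC with hC | hC
    · exact hΨ C hC
    simp only [clE, Finset.mem_image, Finset.mem_product, Finset.mem_univ, and_true] at hC
    obtain ⟨⟨j, ℓ⟩, hj, rfl⟩ := hC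
    by_cases hv : a (PV.v j) = true
    swap
    · exact Or.inr ⟨_, Finset.mem_singleton_self _, by simpa using hv⟩
    -- Step 1: u(ℓ) holds for all labels in the cover
    have hcovU : ∀ ℓ₀ ∈ (((Finset.univ : Finset X).biUnion fun x =>
        (f x).image fun a => (Sum.inl (x, a) : Lab X Y A B)) ∪
       ((Finset.univ : Finset Y).biUnion fun y =>
        (g y).image fun b => (Sum.inr (y, b) : Lab X Y A B))),
        a (PV.u ℓ₀) = true := by
      intro ℓ₀ hℓ₀
      have hmem : (⟨{PV.u ℓ₀}, {PV.v j}⟩ : Clause (PV X Y A B)) ∈ clE' f g t := by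
        simp only [clE', Finset.mem_image, Finset.mem_product]
        exact ⟨(j, ℓ₀), ⟨hj, hℓ₀⟩, rfl⟩
      have := h1 _ (Finset.mem_union_right _ hmem)
      rcases this with ⟨w, hw, hwt⟩ | ⟨w, hw, hwf⟩
      · simp only [Finset.mem_singleton] at hw; subst hw; exact hwt
      · simp only [Finset.mem_singleton] at hw; subst hw; rw [hv] at hwf; exact absurd hwf (by simp)
    have hu1 : ∀ x : X, ∀ a' ∈ f x, a (PV.u (Sum.inl (x, a'))) = true := by
      intro x a' ha'
      apply hcovU
      apply Finset.mem_union_left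
      exact Finset.mem_biUnion.2 ⟨x, Finset.mem_univ _, Finset.mem_image.2 ⟨a', ha', rfl⟩⟩
    have hu2 : ∀ y : Y, ∀ b ∈ g y, a (PV.u (Sum.inr (y, b))) = true := by
      intro y b hb
      apply hcovU
      apply Finset.mem_union_right
      exact Finset.mem_biUnion.2 ⟨y, Finset.mem_univ _, Finset.mem_image.2 ⟨b, hb, rfl⟩⟩
    -- Step 2: el(z,y,b,i) holds for covered edges with b ∈ g y
    have hstep2 : ∀ z y, (z, y) ∈ I.E → ∀ b ∈ g y, ∀ i ∈ Finset.Icc 1 d,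
        a (PV.el z y b i) = true := by
      intro z y hzy b hb i hi
      obtain ⟨a', ha', hab⟩ := hcov.2 (z, y) hzy b hb
      have hmem : (⟨{PV.el z y b i},
          {PV.u (Sum.inl (z, a')), PV.u (Sum.inr (y, b))}⟩ : Clause (PV X Y A B)) ∈
          clA I d := by
        simp only [clA, Finset.mem_biUnion, Finset.mem_product, Finset.mem_image]
        exact ⟨((z, y), i), ⟨hzy, hi⟩, (a', b), hab, rfl⟩
      have := hΨ _ (by
        simp only [PsiCNF, Finset.mem_union]
        exact Or.inl (Or.inl (Or.inl hmem)))
      rcases this with ⟨w, hw, hwt⟩ | ⟨w, hw, hwf⟩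
      · simp only [Finset.mem_singleton] at hw; subst hw; exact hwt
      · simp only [Finset.mem_insert, Finset.mem_singleton] at hw
        rcases hw with rfl | rfl
        · rw [hu1 z a' ha'] at hwf; exact absurd hwf (by simp)
        · rw [hu2 y b hb] at hwf; exact absurd hwf (by simp)
    -- Step 3: e(x,y,i) holds for all edges and i
    have hstep3 : ∀ x y, (x, y) ∈ I.E → ∀ i ∈ Finset.Icc 1 d,
        a (PV.e x y i) = true := by
      intro x y hxy i hi
      obtain ⟨b, hgy⟩ := Finset.card_eq_one.1 (htight y)
      have hmem : (⟨{PV.e x y i},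
          (Nbr I y).image fun z => PV.el z y b i⟩ : Clause (PV X Y A B)) ∈ clB I d := by
        simp only [clB, Finset.mem_image, Finset.mem_product, Finset.mem_univ, and_true]
        exact ⟨(((x, y), b), i), ⟨hxy, hi⟩, rfl⟩
      have := hΨ _ (by
        simp only [PsiCNF, Finset.mem_union]
        exact Or.inl (Or.inl (Or.inr hmem)))
      rcases this with ⟨w, hw, hwt⟩ | ⟨w, hw, hwf⟩
      · simp only [Finset.mem_singleton] at hw; subst hw; exact hwt
      · simp only [Finset.mem_image, Nbr, Finset.mem_filter, Finset.mem_univ,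
          true_and] at hw
        obtain ⟨z, hz, rfl⟩ := hw
        rw [hstep2 z y hz b (by rw [hgy]; exact Finset.mem_singleton_self _) i hi] at hwf
        exact absurd hwf (by simp)
    -- Step 4: u(ℓ) holds for all labels ℓ
    have hstep4 : a (PV.u ℓ) = true := by
      have hmem : (⟨{PV.u ℓ}, bigBody I d⟩ : Clause (PV X Y A B)) ∈ clD I d := by
        simp only [clD, Finset.mem_image]
        exact ⟨ℓ, Finset.mem_univ _, rfl⟩
      have := hΨ _ (by
        simp only [PsiCNF, Finset.mem_union]
        exact Or.inr hmem)
      rcases this with ⟨w, hw, hwt⟩ | ⟨w, hw, hwf⟩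
      · simp only [Finset.mem_singleton] at hw; subst hw; exact hwt
      · simp only [bigBody, Finset.mem_image, Finset.mem_product] at hw
        obtain ⟨⟨⟨x, y⟩, i⟩, ⟨hxy, hi⟩, rfl⟩ := hw
        rw [hstep3 x y hxy i hi] at hwf
        exact absurd hwf (by simp)
    exact Or.inl ⟨_, Finset.mem_singleton_self _, hstep4⟩
  · intro h2 C hC
    rw [Finset.mem_union] at hC
    rcases hC with hC | hC
    · exact h2 C (Finset.mem_union_left _ hC)
    · simp only [clE', Finset.mem_image, Finset.mem_product] at hC
      obtain ⟨⟨j, ℓ⟩, ⟨hj, _⟩, rfl⟩ := hC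
      apply h2
      apply Finset.mem_union_right
      simp only [clE, Finset.mem_image, Finset.mem_product, Finset.mem_univ, and_true]
      exact ⟨(j, ℓ), hj, rfl⟩
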